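/- Under the assumptions of the previous statement, with α_* = ξ_*/2, the total progeny satisfies the exponential moment bound E[exp(α_* T^{(2)})] ≤ (2/((1−e^{−2α_*})(1−e^{−α_*})))·((1−p₀)/(p₀(Δ−2)))². -/

import Mathlib

open MeasureTheory ProbabilityTheory Real Set

/-- The total progeny of a Galton–Watson forest with two initial particles and offspring
variables `ξ 0, ξ 1, …`, realized as the first time `k` at which the random walk with
steps `ξ i − 1` reaches `−2`, i.e. `Σ_{i<k} ξ i = k − 2`. -/
noncomputable def totalProgenyTwo {Ω : Type*} (ξ : ℕ → Ω → ℕ) (ω : Ω) : ℕ :=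
  sInf {k : ℕ | (∑ i ∈ Finset.range k, (ξ i ω : ℤ)) = (k : ℤ) - 2}


lemma gw_q_lt_one (n : ℕ) (hn : 1 ≤ n) (p : ℝ) (hp0 : 0 < p) (hp1 : p < 1)
    (hsub : p * ((n:ℝ)+1) < 1) :
    p * ((n:ℝ)+1)^(n+1) * (1-p)^n / (n:ℝ)^n < 1 := by
  have hn0 : (0:ℝ) < n := by exact_mod_cast hn
  have hp1' : (0:ℝ) < 1 - p := by linarith
  set x : ℝ := p * ((n:ℝ)+1) with hxdef
  set y : ℝ := (1-p) * ((n:ℝ)+1) / n with hydef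
  have hx : 0 < x := by positivity
  have hy : 0 < y := by positivity
  have hmean : (1/((n:ℝ)+1)) * x + ((n:ℝ)/((n:ℝ)+1)) * y = 1 := by
    field_simp [hxdef, hydef]
    rw [hxdef, hydef, mul_div_assoc', mul_div_cancel_left₀ _ hn0.ne']; ring
  have hxy : x ≠ y := by
    intro h
    rw [← h] at hmean
    have : x = 1 := by
      have h1 : (1/((n:ℝ)+1)) + ((n:ℝ)/((n:ℝ)+1)) = 1 := by field_simp; ring
      nlinarith [hmean]
    linarith [hsub, this]
  have hlog := strictConcaveOn_log_Ioi.2 (mem_Ioi.mpr hx) (mem_Ioi.mpr hy) hxy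
    (by positivity : (0:ℝ) < 1/((n:ℝ)+1)) (by positivity : (0:ℝ) < (n:ℝ)/((n:ℝ)+1))
    (by field_simp; ring)
  rw [smul_eq_mul, smul_eq_mul, smul_eq_mul, smul_eq_mul, hmean, Real.log_one] at hlog
  have hlog2 : Real.log x + (n:ℝ) * Real.log y < 0 := by
    have := mul_lt_mul_of_pos_left hlog (by positivity : (0:ℝ) < (n:ℝ)+1)
    rw [mul_zero] at this
    calc Real.log x + (n:ℝ) * Real.log y
        = ((n:ℝ)+1) * (1/((n:ℝ)+1) * Real.log x + (n:ℝ)/((n:ℝ)+1) * Real.log y) := by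
          field_simp
      _ < 0 := this
  have hkey : x * y ^ n < 1 := by
    have : x * y ^ n = Real.exp (Real.log x + (n:ℝ) * Real.log y) := by
      rw [Real.exp_add, Real.exp_log hx, mul_comm (n:ℝ), Real.exp_mul, Real.exp_log hy,
        Real.rpow_natCast]
    rw [this, ← Real.exp_zero]
    exact Real.exp_lt_exp.mpr hlog2
  calc p * ((n:ℝ)+1)^(n+1) * (1-p)^n / (n:ℝ)^n = x * y ^ n := by
        rw [hxdef, hydef, div_pow, mul_pow]
        field_simp
        ring
    _ < 1 := hkey

lemma gw_step {Ω : Type*} [MeasurableSpace Ω] (P : Measure Ω) [IsProbabilityMeasure P]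
    (n : ℕ) (p t : ℝ) (X : Ω → ℕ) (hX : Measurable X)
    (hb : ∀ k, (P {ω | X ω = k}).toReal = (n.choose k : ℝ) * p ^ k * (1 - p) ^ (n - k)) :
    Integrable (fun ω => Real.exp (t * (X ω : ℝ))) P ∧
      mgf (fun ω => (X ω : ℝ)) P t = (1 - p + p * Real.exp t) ^ n := by
  have hnull : ∀ k, n < k → P {ω | X ω = k} = 0 := by
    intro k hk
    have h := hb k
    rw [Nat.choose_eq_zero_of_lt hk] at h
    simp only [Nat.cast_zero, zero_mul] at h
    exact (ENNReal.toReal_eq_zero_iff _).mp h |>.resolve_right (measure_ne_top P _)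
  have hae : ∀ᵐ ω ∂P, X ω ≤ n := by
    rw [ae_iff]
    have hsub : {ω | ¬ X ω ≤ n} ⊆ ⋃ k : ℕ, {ω | X ω = n + 1 + k} := by
      intro ω hω
      exact Set.mem_iUnion.mpr ⟨X ω - (n+1), by simp only [Set.mem_setOf_eq] at hω ⊢; omega⟩
    exact measure_mono_null hsub (measure_iUnion_null fun k => hnull _ (by omega))
  have hkey : ∀ᵐ ω ∂P, Real.exp (t * (X ω : ℝ))
      = ∑ k ∈ Finset.range (n+1),
          Set.indicator {ω' | X ω' = k} (fun _ => Real.exp (t * k)) ω := by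
    filter_upwards [hae] with ω hω
    have : ∀ k ∈ Finset.range (n+1),
        Set.indicator {ω' | X ω' = k} (fun _ => Real.exp (t * k)) ω
          = if X ω = k then Real.exp (t * k) else 0 := by
      intro k _
      by_cases h : X ω = k <;> simp [Set.indicator_apply, Set.mem_setOf_eq, h]
    rw [Finset.sum_congr rfl this, Finset.sum_ite_eq (Finset.range (n+1)) (X ω)
      (fun k => Real.exp (t * k))]
    simp [Finset.mem_range, Nat.lt_succ_iff.mpr hω]
  have hint : ∀ k, Integrable
      (fun ω => Set.indicator {ω' | X ω' = k} (fun _ => Real.exp (t * k)) ω) P := by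
    intro k
    exact (integrable_const _).indicator (hX (measurableSet_singleton k))
  have hintsum : Integrable (fun ω => ∑ k ∈ Finset.range (n+1),
      Set.indicator {ω' | X ω' = k} (fun _ => Real.exp (t * k)) ω) P :=
    integrable_finset_sum _ fun k _ => hint k
  constructor
  · exact hintsum.congr (hkey.mono fun ω h => h.symm)
  · rw [mgf, integral_congr_ae hkey, integral_finset_sum _ fun k _ => hint k]
    have : ∀ k ∈ Finset.range (n+1),
        (∫ ω, Set.indicator {ω' | X ω' = k} (fun _ => Real.exp (t * k)) ω ∂P)
          = (p * Real.exp t) ^ k * (1 - p) ^ (n - k) * (n.choose k : ℝ) := by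
      intro k _
      rw [show {ω' | X ω' = k} = X ⁻¹' {k} from rfl,
        integral_indicator_const _ (hX (measurableSet_singleton k))]
      rw [smul_eq_mul, show X ⁻¹' {k} = {ω | X ω = k} from rfl, measureReal_def, hb k, mul_comm t (k:ℝ), Real.exp_nat_mul, mul_pow]
      ring
    rw [Finset.sum_congr rfl this, ← add_pow]
    ring_nf

lemma gw_T_zero {Ω : Type*} (ξ : ℕ → Ω → ℕ) (ω : Ω) (h : totalProgenyTwo ξ ω = 0) :
    ∀ k : ℕ, (k : ℤ) - 1 ≤ ∑ i ∈ Finset.range k, (ξ i ω : ℤ) := by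
  have hne : ∀ k : ℕ, (∑ i ∈ Finset.range k, (ξ i ω : ℤ)) ≠ (k : ℤ) - 2 := by
    rcases Nat.sInf_eq_zero.mp h with h0 | hemp
    · exfalso; simp only [Set.mem_setOf_eq, Finset.range_zero, Finset.sum_empty,
        Nat.cast_zero] at h0; omega
    · intro k hk
      exact Set.eq_empty_iff_forall_notMem.mp hemp k hk
  intro k
  induction k with
  | zero => simp
  | succ m ih =>
    have h1 : (↑(m+1) : ℤ) - 2 ≤ ∑ i ∈ Finset.range (m+1), (ξ i ω : ℤ) := by
      rw [Finset.sum_range_succ]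
      have : (0:ℤ) ≤ (ξ m ω : ℤ) := Int.natCast_nonneg _
      push_cast
      push_cast at ih
      linarith
    have h2 := hne (m+1)
    omega
lemma gw_T_pos {Ω : Type*} (ξ : ℕ → Ω → ℕ) (ω : Ω) (x : ℕ) (hx : 0 < x)
    (h : totalProgenyTwo ξ ω = x) :
    (∑ i ∈ Finset.range x, (ξ i ω : ℤ)) = (x : ℤ) - 2 := by
  by_cases hne : {k : ℕ | (∑ i ∈ Finset.range k, (ξ i ω : ℤ)) = (k : ℤ) - 2}.Nonempty
  · have := Nat.sInf_mem hne
    rw [totalProgenyTwo] at h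
    rw [h] at this
    exact this
  · exfalso
    rw [totalProgenyTwo, Set.not_nonempty_iff_eq_empty.mp hne, Nat.sInf_empty] at h
    omega

lemma gw_T_meas {Ω : Type*} [MeasurableSpace Ω] (ξ : ℕ → Ω → ℕ) (hmeas : ∀ i, Measurable (ξ i)) :
    ∀ x : ℕ, MeasurableSet {ω | totalProgenyTwo ξ ω = x} := by
  have hE : ∀ k : ℕ, MeasurableSet {ω | (∑ i ∈ Finset.range k, (ξ i ω : ℤ)) = (k : ℤ) - 2} := by
    intro k
    have hsum : Measurable (fun ω => ∑ i ∈ Finset.range k, (ξ i ω : ℤ)) :=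
      Finset.measurable_sum _ fun i _ => Measurable.of_discrete.comp (hmeas i)
    exact hsum (measurableSet_singleton _)
  intro x
  rcases Nat.eq_zero_or_pos x with rfl | hx
  · have : {ω | totalProgenyTwo ξ ω = 0}
        = ⋂ k : ℕ, {ω | (∑ i ∈ Finset.range k, (ξ i ω : ℤ)) = (k : ℤ) - 2}ᶜ := by
      ext ω
      simp only [Set.mem_setOf_eq, Set.mem_iInter, Set.mem_compl_iff]
      constructor
      · intro h k
        intro hk
        exact absurd hk (fun hk' => by
          have := gw_T_zero ξ ω h k
          omega)
      · intro h
        exact Nat.sInf_eq_zero.mpr (Or.inr (Set.eq_empty_iff_forall_notMem.mpr h))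
    rw [this]; exact MeasurableSet.iInter fun k => (hE k).compl
  · have : {ω | totalProgenyTwo ξ ω = x}
        = {ω | (∑ i ∈ Finset.range x, (ξ i ω : ℤ)) = (x : ℤ) - 2}
          ∩ ⋂ (j : ℕ) (_ : j < x), {ω | (∑ i ∈ Finset.range j, (ξ i ω : ℤ)) = (j : ℤ) - 2}ᶜ := by
      ext ω
      simp only [Set.mem_setOf_eq, Set.mem_inter_iff, Set.mem_iInter, Set.mem_compl_iff]
      constructor
      · intro h
        refine ⟨gw_T_pos ξ ω x hx h, fun j hj hjmem => ?_⟩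
        have : sInf {k : ℕ | (∑ i ∈ Finset.range k, (ξ i ω : ℤ)) = (k : ℤ) - 2} ≤ j :=
          Nat.sInf_le hjmem
        rw [totalProgenyTwo] at h
        omega
      · rintro ⟨hmem, hmin⟩
        have h1 : totalProgenyTwo ξ ω ≤ x := Nat.sInf_le hmem
        have h2 := Nat.sInf_mem (⟨x, hmem⟩ :
          {k : ℕ | (∑ i ∈ Finset.range k, (ξ i ω : ℤ)) = (k : ℤ) - 2}.Nonempty)
        rcases lt_or_eq_of_le h1 with hlt | heq
        · exact absurd h2 (hmin _ hlt)
        · exact heq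
    rw [this]
    exact (hE x).inter (MeasurableSet.iInter fun j => MeasurableSet.iInter fun _ => (hE j).compl)

set_option maxHeartbeats 2000000 in
/-- **Exponential moment of the total progeny.**
With `ξ_* = log((Δ−2)^{Δ−2}/(p₀(Δ−1)^{Δ−1}(1−p₀)^{Δ−2}))` and `α_* = ξ_*/2`,
`E[exp(α_* T^{(2)})] ≤ (2/((1−e^{−2α_*})(1−e^{−α_*})))·((1−p₀)/(p₀(Δ−2)))²`. -/
theorem totalProgeny_exp_moment {Ω : Type*} [MeasurableSpace Ω] (P : Measure Ω)
    [IsProbabilityMeasure P]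
    (Δ : ℕ) (hΔ : 3 ≤ Δ) (p₀ : ℝ) (hp : p₀ ∈ Set.Ioo (0:ℝ) 1)
    (hsub : p₀ * ((Δ : ℝ) - 1) < 1)
    (ξ : ℕ → Ω → ℕ) (hmeas : ∀ i, Measurable (ξ i))
    (hindep : iIndepFun ξ P)
    (hbin : ∀ i k, (P {ω | ξ i ω = k}).toReal
      = (Nat.choose (Δ - 1) k : ℝ) * p₀ ^ k * (1 - p₀) ^ (Δ - 1 - k))
    (ξstar αstar : ℝ)
    (hξstar : ξstar = Real.log (((Δ : ℝ) - 2) ^ (Δ - 2)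
      / (p₀ * ((Δ : ℝ) - 1) ^ (Δ - 1) * (1 - p₀) ^ (Δ - 2))))
    (hαstar : αstar = ξstar / 2) :
    ∫⁻ ω, ENNReal.ofReal (Real.exp (αstar * totalProgenyTwo ξ ω)) ∂P
      ≤ ENNReal.ofReal
          ((2 / ((1 - Real.exp (-(2 * αstar))) * (1 - Real.exp (-αstar))))
            * ((1 - p₀) / (p₀ * ((Δ : ℝ) - 2))) ^ 2) := by
  obtain ⟨hp0, hp1⟩ := hp
  set n := Δ - 2 with hn
  have hn1 : 1 ≤ n := by omega
  have hΔ1 : Δ - 1 = n + 1 := by omega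
  have e2 : ((Δ:ℝ) - 2) = (n:ℝ) := by
    rw [hn, Nat.cast_sub (by omega : 2 ≤ Δ)]; norm_num
  have e1 : ((Δ:ℝ) - 1) = (n:ℝ) + 1 := by
    rw [hn, Nat.cast_sub (by omega : 2 ≤ Δ)]; push_cast; ring
  rw [hΔ1] at hbin hξstar
  rw [e1] at hsub
  rw [e2, e1] at hξstar
  have hn0R : (0:ℝ) < n := by exact_mod_cast hn1
  have hp1' : (0:ℝ) < 1 - p₀ := by linarith
  have hrngt : p₀ * n < 1 - p₀ := by nlinarith
  set r : ℝ := (1 - p₀)/(p₀ * n) with hrdef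
  have hr0 : 0 < r := by positivity
  have hr1 : 1 < r := by rw [hrdef, lt_div_iff₀ (by positivity)]; linarith
  set θ := Real.log r with hθdef
  have hθ0 : 0 ≤ θ := Real.log_nonneg hr1.le
  have hexpθ : Real.exp θ = r := Real.exp_log hr0
  set q : ℝ := p₀ * ((n:ℝ)+1)^(n+1) * (1-p₀)^n / (n:ℝ)^n with hqdef
  have hq0 : 0 < q := by positivity
  have hq1 : q < 1 := gw_q_lt_one n hn1 p₀ hp0 hp1 hsub
  -- exp(-ξstar) = q
  have hξexp : Real.exp (-ξstar) = q := by
    rw [hξstar, ← Real.log_inv, Real.exp_log (by positivity), inv_div, hqdef]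
  have hξ0 : 0 < ξstar := by
    by_contra h
    push_neg at h
    have h2 : (1:ℝ) ≤ Real.exp (-ξstar) := Real.one_le_exp (by linarith)
    rw [hξexp] at h2; linarith
  have hα0 : 0 < αstar := by rw [hαstar]; linarith
  set u := Real.exp (-αstar) with hudef
  have hu0 : 0 < u := Real.exp_pos _
  have hu1 : u < 1 := Real.exp_lt_one_iff.mpr (by linarith)
  have huq : u^2 = q := by
    rw [hudef, ← Real.exp_nat_mul, ← hξexp]
    congr 1
    rw [hαstar]; push_cast; ring
  -- mgf per step
  set M : ℝ := (1 - p₀ + p₀ * r)^(n+1) with hMdef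
  have hstep : ∀ i, Integrable (fun ω => Real.exp (θ * (ξ i ω : ℝ))) P ∧
      mgf (fun ω => (ξ i ω:ℝ)) P θ = M := by
    intro i
    have h := gw_step P (n+1) p₀ θ (ξ i) (hmeas i) (fun k => hbin i k)
    rw [hexpθ] at h
    exact h
  have hqM : r⁻¹ * M = q := by
    have h1 : 1 - p₀ + p₀ * r = (1-p₀) * ((n:ℝ)+1) / n := by
      rw [hrdef]; field_simp
    rw [hMdef, h1, div_pow, mul_pow, hqdef, hrdef, inv_div]
    field_simp
    ring
  -- independence of real casts
  have hmeasR : ∀ i, Measurable (fun ω => (ξ i ω : ℝ)) :=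
    fun i => Measurable.of_discrete.comp (hmeas i)
  have hindepR : iIndepFun (fun i ω => ((ξ i ω : ℕ) : ℝ)) P :=
    hindep.comp (fun _ (k : ℕ) => (k : ℝ)) (fun _ => Measurable.of_discrete)
  -- Chernoff bound
  have hcher : ∀ x : ℕ, ∀ ε : ℝ,
      (P {ω | ε ≤ ∑ i ∈ Finset.range x, (ξ i ω : ℝ)}).toReal
        ≤ Real.exp (-θ * ε) * M ^ x := by
    intro x ε
    have hint : Integrable
        (fun ω => Real.exp (θ * (∑ i ∈ Finset.range x, fun ω' => (ξ i ω' : ℝ)) ω)) P :=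
      hindepR.integrable_exp_mul_sum hmeasR (fun i _ => (hstep i).1)
    have h := measure_ge_le_exp_mul_mgf (μ := P)
      (X := ∑ i ∈ Finset.range x, fun ω => (ξ i ω : ℝ)) ε hθ0 hint
    rw [hindepR.mgf_sum hmeasR (Finset.range x)] at h
    have hprod : (∏ i ∈ Finset.range x, mgf (fun ω => (ξ i ω : ℝ)) P θ) = M ^ x := by
      rw [Finset.prod_congr rfl (fun i _ => (hstep i).2), Finset.prod_const,
        Finset.card_range]
    rw [hprod] at h
    have hset : {ω | ε ≤ (∑ i ∈ Finset.range x, fun ω' => (ξ i ω' : ℝ)) ω}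
        = {ω | ε ≤ ∑ i ∈ Finset.range x, (ξ i ω : ℝ)} := by
      ext ω
      simp [Finset.sum_apply]
    rw [hset] at h
    exact h
  have hcherx : ∀ x : ℕ,
      (P {ω | (x:ℝ) - 2 ≤ ∑ i ∈ Finset.range x, (ξ i ω : ℝ)}).toReal ≤ r^2 * q^x := by
    intro x
    refine (hcher x _).trans (le_of_eq ?_)
    have h1 : Real.exp (-θ * ((x:ℝ)-2)) = r^2 * (r⁻¹)^x := by
      have : -θ * ((x:ℝ)-2) = (2:ℕ) * θ + (x:ℕ) * (-θ) := by push_cast; ring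
      rw [this, Real.exp_add, Real.exp_nat_mul, Real.exp_nat_mul, hexpθ, Real.exp_neg, hexpθ]
    rw [h1, mul_assoc, ← mul_pow, hqM]
  -- measure bounds for T
  have hTmeas := gw_T_meas ξ hmeas
  have hPx : ∀ x : ℕ, 0 < x →
      (P {ω | totalProgenyTwo ξ ω = x}).toReal ≤ r^2 * q^x := by
    intro x hx
    refine le_trans (ENNReal.toReal_mono (measure_ne_top _ _) (measure_mono ?_)) (hcherx x)
    intro ω h
    have h2 := gw_T_pos ξ ω x hx h
    have h3 : ((∑ i ∈ Finset.range x, (ξ i ω : ℤ) : ℤ) : ℝ)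
        = ∑ i ∈ Finset.range x, (ξ i ω : ℝ) := by push_cast; rfl
    simp only [Set.mem_setOf_eq]
    rw [← h3, h2]; push_cast; linarith
  have hP0 : P {ω | totalProgenyTwo ξ ω = 0} = 0 := by
    have hb : ∀ x : ℕ, (P {ω | totalProgenyTwo ξ ω = 0}).toReal ≤ r^2 * q^x := by
      intro x
      refine le_trans (ENNReal.toReal_mono (measure_ne_top _ _) (measure_mono ?_)) (hcherx x)
      intro ω h
      have h2 := gw_T_zero ξ ω h x
      have h3 : ((∑ i ∈ Finset.range x, (ξ i ω : ℤ) : ℤ) : ℝ)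
          = ∑ i ∈ Finset.range x, (ξ i ω : ℝ) := by push_cast; rfl
      simp only [Set.mem_setOf_eq]
      have h4 : ((x:ℤ) - 1 : ℤ) ≤ (∑ i ∈ Finset.range x, (ξ i ω : ℤ)) := h2
      have h5 : ((x:ℝ) - 1 : ℝ) ≤ ((∑ i ∈ Finset.range x, (ξ i ω : ℤ) : ℤ) : ℝ) := by
        exact_mod_cast h4
      rw [h3] at h5; linarith
    have hlim : Filter.Tendsto (fun x : ℕ => r^2 * q^x) Filter.atTop (nhds 0) := by
      have := (tendsto_pow_atTop_nhds_zero_of_lt_one hq0.le hq1).const_mul (r^2)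
      simpa using this
    have h0 : (P {ω | totalProgenyTwo ξ ω = 0}).toReal ≤ 0 := ge_of_tendsto' hlim hb
    have h1 : (P {ω | totalProgenyTwo ξ ω = 0}).toReal = 0 :=
      le_antisymm h0 ENNReal.toReal_nonneg
    exact ((ENNReal.toReal_eq_zero_iff _).mp h1).resolve_right (measure_ne_top _ _)
  -- decomposition of the integral
  have hdecomp : ∫⁻ ω, ENNReal.ofReal (Real.exp (αstar * totalProgenyTwo ξ ω)) ∂P
      = ∑' x : ℕ, ENNReal.ofReal (Real.exp (αstar * x)) * P {ω | totalProgenyTwo ξ ω = x} := by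
    have hfun : ∀ ω, ENNReal.ofReal (Real.exp (αstar * totalProgenyTwo ξ ω))
        = ∑' x : ℕ, Set.indicator {ω' | totalProgenyTwo ξ ω' = x}
            (fun _ => ENNReal.ofReal (Real.exp (αstar * x))) ω := by
      intro ω
      rw [tsum_eq_single (totalProgenyTwo ξ ω) ?_]
      · simp [Set.indicator_apply]
      · intro x hx
        simp only [Set.indicator_apply, Set.mem_setOf_eq]
        rw [if_neg (fun h => hx (Eq.symm h))]
    simp_rw [hfun]
    rw [lintegral_tsum fun x => (measurable_const.indicator (hTmeas x)).aemeasurable]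
    congr 1
    ext x
    rw [lintegral_indicator_const (hTmeas x)]
  rw [hdecomp]
  -- bound the series
  have hmq : ∀ m : ℕ, Real.exp (αstar * m) * (r^2 * q^m) = r^2 * u^m := by
    intro m
    have h1 : Real.exp (αstar * m) * u^m = 1 := by
      rw [hudef, ← Real.exp_nat_mul, ← Real.exp_add]
      norm_num [mul_comm]
    have h2 : q^m = u^m * u^m := by rw [← huq]; ring
    calc Real.exp (αstar * m) * (r^2 * q^m)
        = r^2 * ((Real.exp (αstar * m) * u^m) * u^m) := by rw [h2]; ring
      _ = r^2 * u^m := by rw [h1, one_mul]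
  have hterm : ∀ x : ℕ,
      ENNReal.ofReal (Real.exp (αstar * ((x+1 : ℕ) : ℝ))) * P {ω | totalProgenyTwo ξ ω = x+1}
        ≤ ENNReal.ofReal (r^2 * u^(x+1)) := by
    intro x
    have h1 : P {ω | totalProgenyTwo ξ ω = x+1}
        ≤ ENNReal.ofReal (r^2 * q^(x+1)) := by
      rw [← ENNReal.ofReal_toReal (measure_ne_top P {ω | totalProgenyTwo ξ ω = x+1})]
      exact ENNReal.ofReal_le_ofReal (hPx (x+1) (Nat.succ_pos x))
    calc ENNReal.ofReal (Real.exp (αstar * ((x+1 : ℕ) : ℝ))) * P {ω | totalProgenyTwo ξ ω = x+1}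
        ≤ ENNReal.ofReal (Real.exp (αstar * ((x+1 : ℕ) : ℝ))) * ENNReal.ofReal (r^2 * q^(x+1)) :=
          mul_le_mul_right h1 _
      _ = ENNReal.ofReal (Real.exp (αstar * ((x+1 : ℕ) : ℝ)) * (r^2 * q^(x+1))) :=
          (ENNReal.ofReal_mul (Real.exp_nonneg _)).symm
      _ = ENNReal.ofReal (r^2 * u^(x+1)) := by rw [hmq (x+1)]
  have hsummable : Summable (fun x : ℕ => r^2 * u^(x+1)) := by
    apply Summable.mul_left
    exact (summable_geometric_of_lt_one hu0.le hu1).comp_injective (add_left_injective 1)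
  calc ∑' x : ℕ, ENNReal.ofReal (Real.exp (αstar * x)) * P {ω | totalProgenyTwo ξ ω = x}
      = ENNReal.ofReal (Real.exp (αstar * (0:ℕ))) * P {ω | totalProgenyTwo ξ ω = 0}
        + ∑' x : ℕ, ENNReal.ofReal (Real.exp (αstar * ((x+1:ℕ):ℝ)))
            * P {ω | totalProgenyTwo ξ ω = x+1} := tsum_eq_zero_add' ENNReal.summable
    _ = ∑' x : ℕ, ENNReal.ofReal (Real.exp (αstar * ((x+1:ℕ):ℝ)))
            * P {ω | totalProgenyTwo ξ ω = x+1} := by rw [hP0, mul_zero, zero_add]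
    _ ≤ ∑' x : ℕ, ENNReal.ofReal (r^2 * u^(x+1)) := ENNReal.tsum_le_tsum hterm
    _ = ENNReal.ofReal (∑' x : ℕ, r^2 * u^(x+1)) :=
        (ENNReal.ofReal_tsum_of_nonneg (fun x => by positivity) hsummable).symm
    _ = ENNReal.ofReal (r^2 * u * (1-u)⁻¹) := by
        congr 1
        have : ∀ x : ℕ, r^2 * u^(x+1) = (r^2 * u) * u^x := by intro x; rw [pow_succ]; ring
        rw [tsum_congr this, tsum_mul_left, tsum_geometric_of_lt_one hu0.le hu1]
    _ ≤ ENNReal.ofReal ((2 / ((1 - Real.exp (-(2 * αstar))) * (1 - Real.exp (-αstar))))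
            * ((1 - p₀) / (p₀ * ((Δ : ℝ) - 2))) ^ 2) := by
        apply ENNReal.ofReal_le_ofReal
        rw [e2]
        have hu2 : Real.exp (-(2 * αstar)) = u^2 := by
          rw [hudef, ← Real.exp_nat_mul]; congr 1; push_cast; ring
        rw [hu2, show Real.exp (-αstar) = u from rfl]
        have hr2 : ((1 - p₀) / (p₀ * (n:ℝ))) ^ 2 = r^2 := by rw [hrdef]
        rw [hr2]
        have hpos1 : (0:ℝ) < 1 - u^2 := by nlinarith
        have hpos2 : (0:ℝ) < 1 - u := by linarith
        have key : u * (1-u)⁻¹ ≤ 2 / ((1 - u^2) * (1-u)) := by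
          rw [← div_eq_mul_inv, div_le_div_iff₀ hpos2 (by positivity)]
          nlinarith
        calc r^2 * u * (1-u)⁻¹ = (u * (1-u)⁻¹) * r^2 := by ring
          _ ≤ (2 / ((1 - u^2) * (1-u))) * r^2 := by
              apply mul_le_mul_of_nonneg_right key (by positivity)
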